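/- The semi-tensor product is associative: (A ⋉ B) ⋉ C = A ⋉ (B ⋉ C) for all real matrices A, B, C. -/

import Mathlib

open Matrix Kronecker

/-- re-chunking equivalence -/
def cge {a b c d : ℕ} (h : a * b = c * d) : Fin a × Fin b ≃ Fin c × Fin d :=
  (finProdFinEquiv.trans (finCongr h)).trans finProdFinEquiv.symm

def flatE (a b c : ℕ) : (Fin a × Fin b) × Fin c ≃ Fin a × Fin (b * c) :=
  (Equiv.prodAssoc _ _ _).trans ((Equiv.refl (Fin a)).prodCongr finProdFinEquiv)

def chop (a b c : ℕ) : Fin (a * b) × Fin c ≃ Fin a × Fin (b * c) :=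
  (finProdFinEquiv.symm.prodCongr (Equiv.refl (Fin c))).trans (flatE a b c)

def pres2 {a b c d : ℕ} (f : Fin a × Fin b → Fin c × Fin d) : Prop :=
  ∀ x, d * ((f x).1 : ℕ) + ((f x).2 : ℕ) = b * (x.1 : ℕ) + (x.2 : ℕ)

def pres1 {R c d : ℕ} (f : Fin R → Fin c × Fin d) : Prop :=
  ∀ x, d * ((f x).1 : ℕ) + ((f x).2 : ℕ) = (x : ℕ)

lemma decomp_aux {d A B r s : ℕ} (hr : r < d) (hs : s < d) (h : d*A+r = d*B+s) :
    A = B ∧ r = s := by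
  have hA : A = B := by
    have := congrArg (· / d) h
    simpa [Nat.mul_add_div (show 0 < d by omega), Nat.div_eq_of_lt hr,
      Nat.div_eq_of_lt hs] using this
  subst hA
  omega

lemma uniq2 {a b c d : ℕ} {f g : Fin a × Fin b → Fin c × Fin d}
    (hf : pres2 f) (hg : pres2 g) : f = g := by
  funext x
  obtain ⟨h1, h2⟩ := decomp_aux (f x).2.isLt (g x).2.isLt ((hf x).trans (hg x).symm)
  exact Prod.ext (Fin.ext h1) (Fin.ext h2)

lemma uniq1 {R c d : ℕ} {f g : Fin R → Fin c × Fin d}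
    (hf : pres1 f) (hg : pres1 g) : f = g := by
  funext x
  obtain ⟨h1, h2⟩ := decomp_aux (f x).2.isLt (g x).2.isLt ((hf x).trans (hg x).symm)
  exact Prod.ext (Fin.ext h1) (Fin.ext h2)

lemma pres2_comp {a b c d e f : ℕ} {g : Fin c × Fin d → Fin e × Fin f}
    {h : Fin a × Fin b → Fin c × Fin d} (hg : pres2 g) (hh : pres2 h) :
    pres2 (g ∘ h) := fun x => (hg (h x)).trans (hh x)

lemma pres2_trans {a b c d e f : ℕ} {g : Fin a × Fin b ≃ Fin c × Fin d}
    {h : Fin c × Fin d ≃ Fin e × Fin f} (hg : pres2 ⇑g) (hh : pres2 ⇑h) :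
    pres2 ⇑(g.trans h) := fun x => (hh (g x)).trans (hg x)

lemma pres1_comp {R c d e f : ℕ} {g : Fin c × Fin d → Fin e × Fin f}
    {h : Fin R → Fin c × Fin d} (hg : pres2 g) (hh : pres1 h) :
    pres1 (g ∘ h) := fun x => (hg (h x)).trans (hh x)

lemma pres2_symm {a b c d : ℕ} {e : Fin a × Fin b ≃ Fin c × Fin d}
    (he : pres2 ⇑e) : pres2 ⇑e.symm := by
  intro x
  have := he (e.symm x)
  simpa using this.symm

lemma pres2_cge {a b c d : ℕ} (h : a * b = c * d) : pres2 ⇑(cge h) := by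
  intro x
  simp only [cge, Equiv.trans_apply, finProdFinEquiv_symm_apply, finCongr_apply,
    Fin.coe_divNat, Fin.coe_modNat, Fin.coe_cast, finProdFinEquiv_apply_val]
  rw [Nat.div_add_mod]
  omega

lemma pres2_chop (a b c : ℕ) : pres2 ⇑(chop a b c) := by
  intro ⟨x₁, x₂⟩
  simp only [chop, flatE, Equiv.trans_apply, Equiv.prodCongr_apply, Prod.map,
    finProdFinEquiv_symm_apply, Equiv.prodAssoc_apply, Equiv.coe_refl, id_eq,
    Fin.coe_divNat, Fin.coe_modNat, finProdFinEquiv_apply_val]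
  conv_rhs => rw [show ((x₁ : ℕ)) = b * ((x₁:ℕ)/b) + (x₁:ℕ)%b from (Nat.div_add_mod _ _).symm]
  ring

lemma pres1_fpf_symm {a b : ℕ} : pres1 ⇑(finProdFinEquiv.symm : Fin (a*b) ≃ _) := by
  intro x
  simp only [finProdFinEquiv_symm_apply, Fin.coe_divNat, Fin.coe_modNat]
  rw [Nat.div_add_mod]

lemma pres2_castr {a b b' : ℕ} (h : b = b') :
    pres2 ⇑((Equiv.refl (Fin a)).prodCongr (finCongr h)) := by
  subst h; intro x; simp

lemma pres1_comp_cast {R R' c d : ℕ} {f : Fin R → Fin c × Fin d} (h : R' = R)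
    (hf : pres1 f) : pres1 (f ∘ ⇑(finCongr h)) := by
  subst h; simpa [Function.comp] using hf

lemma pres1_precast {a c d : ℕ} {f : Fin a → Fin c × Fin d} (hf : pres1 f)
    {a' : ℕ} (h : a = a') : pres1 (f ∘ ⇑(finCongr h).symm) :=
  fun x => (hf _).trans (by simp)

lemma pres2_flat_conj {a b c d g : ℕ} (e : Fin a × Fin b ≃ Fin c × Fin d)
    (he : pres2 ⇑e) :
    pres2 ⇑((flatE a b g).symm.trans ((e.prodCongr (Equiv.refl (Fin g))).trans (flatE c d g))) := by
  intro ⟨k, w⟩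
  simp only [flatE, Equiv.symm_trans_apply, Equiv.prodCongr_apply, Equiv.trans_apply,
    Equiv.prodAssoc_apply, Equiv.prodAssoc_symm_apply, Equiv.symm_symm,
    Equiv.prodCongr_symm, Equiv.refl_symm, Equiv.prodCongr_apply, Prod.map,
    Equiv.coe_refl, id_eq, finProdFinEquiv_symm_apply, finProdFinEquiv_apply_val,
    Fin.coe_divNat, Fin.coe_modNat]
  have h1 := he (k, w.divNat)
  calc d * g * ((e (k, w.divNat)).1 : ℕ) + (((w.modNat : ℕ)) + g * ((e (k, w.divNat)).2 : ℕ))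
      = g * (d * ((e (k, w.divNat)).1:ℕ) + ((e (k, w.divNat)).2:ℕ)) + (w.modNat:ℕ) := by ring
    _ = g * (b * (k:ℕ) + ((w.divNat : Fin b) :ℕ)) + (w.modNat : ℕ) := by rw [h1]
    _ = b * g * (k:ℕ) + (g * ((w:ℕ)/g) + (w:ℕ)%g) := by
        rw [Fin.coe_divNat, Fin.coe_modNat]; ring
    _ = b * g * (k:ℕ) + (w:ℕ) := by rw [Nat.div_add_mod]

section matinfra
variable {X Y Y' Z R S T : Type*} [Fintype Y] [Fintype Y'] [Fintype S]

lemma PM (M : Matrix X Y ℝ) (N : Matrix Y' Z ℝ) (e₁ : R → X) (e₂ : S ≃ Y) (e₃ : S ≃ Y')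
    (e₄ : T → Z) :
    M.submatrix e₁ ⇑e₂ * N.submatrix ⇑e₃ e₄
      = (M * N.submatrix (⇑(e₂.symm.trans e₃)) _root_.id).submatrix e₁ e₄ := by
  have h : N.submatrix ⇑e₃ e₄
      = (N.submatrix (⇑(e₂.symm.trans e₃)) _root_.id).submatrix ⇑e₂ e₄ := by
    rw [Matrix.submatrix_submatrix,
      show ⇑(e₂.symm.trans e₃) ∘ ⇑e₂ = ⇑e₃ from funext fun x => by simp,
      show _root_.id ∘ e₄ = e₄ from rfl]
  rw [h, Matrix.submatrix_mul_equiv]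

lemma mul_submatrix_right [Fintype Z] (M : Matrix X Y ℝ) (N : Matrix Y' Z ℝ)
    (f : Y → Y') (g : T → Z) :
    M * N.submatrix f g = (M * N.submatrix f _root_.id).submatrix _root_.id g := by
  ext i j
  simp [Matrix.mul_apply]

lemma submatrix_mul_id [Fintype Z] (M : Matrix X Y ℝ) (N : Matrix Y Z ℝ)
    (e : R → X) (f : T → Z) :
    (M * N).submatrix e f = M.submatrix e _root_.id * N.submatrix _root_.id f :=
  Matrix.submatrix_mul M N e _root_.id f Function.bijective_id

end matinfra

lemma kron_one_submatrix {A B : Type*} {X Y : Type*} (M : Matrix A B ℝ)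
    (f : X → A) (g : Y → B) (c : ℕ) :
    (M.submatrix f g) ⊗ₖ (1 : Matrix (Fin c) (Fin c) ℝ)
      = (M ⊗ₖ 1).submatrix (Prod.map f _root_.id) (Prod.map g _root_.id) := rfl

lemma mul_kron_one {A B D : Type*} [Fintype B] (M : Matrix A B ℝ) (N : Matrix B D ℝ)
    (c : ℕ) :
    (M * N) ⊗ₖ (1 : Matrix (Fin c) (Fin c) ℝ)
      = (M ⊗ₖ (1 : Matrix (Fin c) (Fin c) ℝ)) * (N ⊗ₖ (1 : Matrix (Fin c) (Fin c) ℝ)) := by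
  have := Matrix.mul_kronecker_mul M N (1 : Matrix (Fin c) (Fin c) ℝ) (1 : Matrix (Fin c) (Fin c) ℝ)
  rwa [one_mul] at this

lemma submatrix_congr' {X Y R S : Type*} {M M' : Matrix X Y ℝ} {f f' : R → X} {g g' : S → Y}
    (hM : M = M') (hf : f = f') (hg : g = g') : M.submatrix f g = M'.submatrix f' g' := by
  rw [hM, hf, hg]

lemma FL {a a' : ℕ} (M : Matrix (Fin a) (Fin a') ℝ) (b c : ℕ) :
    (M ⊗ₖ (1 : Matrix (Fin b) (Fin b) ℝ)) ⊗ₖ (1 : Matrix (Fin c) (Fin c) ℝ)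
      = (M ⊗ₖ (1 : Matrix (Fin (b*c)) (Fin (b*c)) ℝ)).submatrix
          ⇑(flatE a b c) ⇑(flatE a' b c) := by
  ext ⟨⟨i,x⟩,y⟩ ⟨⟨j,x'⟩,y'⟩
  simp only [Matrix.kroneckerMap_apply, Matrix.submatrix_apply, flatE,
    Equiv.trans_apply, Equiv.prodAssoc_apply, Equiv.prodCongr_apply, Prod.map,
    Equiv.coe_refl, id_eq, Matrix.one_apply, Equiv.apply_eq_iff_eq, Prod.mk.injEq]
  by_cases hx : x = x' <;> by_cases hy : y = y' <;> simp [hx, hy]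

lemma kron_one_cast {a b : ℕ} (M : Matrix (Fin a) (Fin b) ℝ) {c c' : ℕ} (h : c = c') :
    M ⊗ₖ (1 : Matrix (Fin c) (Fin c) ℝ)
      = (M ⊗ₖ (1 : Matrix (Fin c') (Fin c') ℝ)).submatrix
          ⇑((Equiv.refl (Fin a)).prodCongr (finCongr h))
          ⇑((Equiv.refl (Fin b)).prodCongr (finCongr h)) := by
  subst h
  ext ⟨i,x⟩ ⟨j,y⟩
  simp

/-- Semi-tensor product of real matrices:
`A ⋉ B = (A ⊗ I_{t/n})(B ⊗ I_{t/p})` where `t = lcm(n,p)`. -/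
noncomputable def stp {m n p q : ℕ} (A : Matrix (Fin m) (Fin n) ℝ)
    (B : Matrix (Fin p) (Fin q) ℝ) :
    Matrix (Fin (m * (Nat.lcm n p / n))) (Fin (q * (Nat.lcm n p / p))) ℝ :=
  ((A ⊗ₖ (1 : Matrix (Fin (Nat.lcm n p / n)) (Fin (Nat.lcm n p / n)) ℝ)).reindex
      finProdFinEquiv
      (finProdFinEquiv.trans (finCongr (Nat.mul_div_cancel' (Nat.dvd_lcm_left n p))))) *
  ((B ⊗ₖ (1 : Matrix (Fin (Nat.lcm n p / p)) (Fin (Nat.lcm n p / p)) ℝ)).reindex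
      (finProdFinEquiv.trans (finCongr (Nat.mul_div_cancel' (Nat.dvd_lcm_right n p))))
      finProdFinEquiv)

noncomputable def nf2 {a b c d : ℕ} (M : Matrix (Fin a) (Fin b) ℝ) (N : Matrix (Fin c) (Fin d) ℝ)
    (N₁ N₂ : ℕ) (h : b * N₁ = c * N₂) : Matrix (Fin a × Fin N₁) (Fin d × Fin N₂) ℝ :=
  (M ⊗ₖ (1 : Matrix (Fin N₁) (Fin N₁) ℝ)) * (N ⊗ₖ (1 : Matrix (Fin N₂) (Fin N₂) ℝ)).submatrix ⇑(cge h) _root_.id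

lemma pres2_Emix {a b c d t : ℕ} (h1 : a * b = t) (h2 : c * d = t) :
    pres2 ⇑(((finProdFinEquiv.trans (finCongr h1)).symm).symm.trans
      ((finProdFinEquiv.trans (finCongr h2)).symm)) := by
  intro x
  simp only [Equiv.symm_symm, Equiv.trans_apply, Equiv.symm_trans_apply,
    finCongr_apply, finCongr_symm, finProdFinEquiv_symm_apply,
    Fin.coe_divNat, Fin.coe_modNat, Fin.coe_cast, finProdFinEquiv_apply_val]
  rw [Nat.div_add_mod]
  omega

lemma stp_nf {m n p q : ℕ} (A : Matrix (Fin m) (Fin n) ℝ) (B : Matrix (Fin p) (Fin q) ℝ) :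
    stp A B = (nf2 A B (Nat.lcm n p / n) (Nat.lcm n p / p)
        ((Nat.mul_div_cancel' (Nat.dvd_lcm_left n p)).trans
          (Nat.mul_div_cancel' (Nat.dvd_lcm_right n p)).symm)).submatrix
      ⇑(finProdFinEquiv.symm) ⇑(finProdFinEquiv.symm) := by
  unfold stp nf2
  rw [Matrix.reindex_apply, Matrix.reindex_apply]
  rw [PM (A ⊗ₖ 1) (B ⊗ₖ 1) ⇑finProdFinEquiv.symm
    (finProdFinEquiv.trans (finCongr (Nat.mul_div_cancel' (Nat.dvd_lcm_left n p)))).symm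
    (finProdFinEquiv.trans (finCongr (Nat.mul_div_cancel' (Nat.dvd_lcm_right n p)))).symm
    ⇑finProdFinEquiv.symm]
  congr 1

lemma nf2_kron {a b c d : ℕ} (M : Matrix (Fin a) (Fin b) ℝ) (N : Matrix (Fin c) (Fin d) ℝ)
    (N₁ N₂ g : ℕ) (h : b * N₁ = c * N₂) :
    ((nf2 M N N₁ N₂ h).submatrix ⇑(finProdFinEquiv.symm) ⇑(finProdFinEquiv.symm)) ⊗ₖ
        (1 : Matrix (Fin g) (Fin g) ℝ)
      = (nf2 M N (N₁*g) (N₂*g) (by rw [← mul_assoc, ← mul_assoc, h])).submatrix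
          ⇑(chop a N₁ g) ⇑(chop d N₂ g) := by
  unfold nf2
  rw [kron_one_submatrix, mul_kron_one, FL M N₁ g, kron_one_submatrix, FL N N₂ g,
    Matrix.submatrix_submatrix]
  have e3 : ⇑(flatE c N₂ g) ∘ Prod.map ⇑(cge h) _root_.id
      = ⇑(((cge h).prodCongr (Equiv.refl (Fin g))).trans (flatE c N₂ g)) := by
    funext x; simp
  have e4 : ⇑(flatE d N₂ g) ∘ Prod.map _root_.id _root_.id = ⇑(flatE d N₂ g) := by
    funext x; simp
  rw [e3, e4]
  rw [PM (M ⊗ₖ 1) (N ⊗ₖ 1) ⇑(flatE a N₁ g) (flatE b N₁ g)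
    (((cge h).prodCongr (Equiv.refl (Fin g))).trans (flatE c N₂ g)) ⇑(flatE d N₂ g)]
  rw [Matrix.submatrix_submatrix]
  have r1 : ⇑(flatE a N₁ g) ∘ Prod.map ⇑(finProdFinEquiv.symm) _root_.id = ⇑(chop a N₁ g) := by
    funext x; simp [chop]
  have r2 : ⇑(flatE d N₂ g) ∘ Prod.map ⇑(finProdFinEquiv.symm) _root_.id = ⇑(chop d N₂ g) := by
    funext x; simp [chop]
  rw [r1, r2]
  exact congrArg (fun F => ((M ⊗ₖ (1 : Matrix (Fin (N₁*g)) (Fin (N₁*g)) ℝ)) *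
      (N ⊗ₖ (1 : Matrix (Fin (N₂*g)) (Fin (N₂*g)) ℝ)).submatrix F _root_.id).submatrix
      ⇑(chop a N₁ g) ⇑(chop d N₂ g))
    (uniq2 (pres2_flat_conj (cge h) (pres2_cge h)) (pres2_cge _))

lemma nf2_nest_left {a b c d e f : ℕ} (M : Matrix (Fin a) (Fin b) ℝ)
    (N : Matrix (Fin c) (Fin d) ℝ) (C : Matrix (Fin e) (Fin f) ℝ)
    (N₁ N₂ g₃ g₄ : ℕ) (h : b * N₁ = c * N₂) (h2 : (d * N₂) * g₃ = e * g₄) :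
    nf2 ((nf2 M N N₁ N₂ h).submatrix ⇑(finProdFinEquiv.symm) ⇑(finProdFinEquiv.symm)) C g₃ g₄ h2
      = ((nf2 M N (N₁*g₃) (N₂*g₃) (by rw [← mul_assoc, ← mul_assoc, h])) *
          (C ⊗ₖ 1).submatrix (⇑((chop d N₂ g₃).symm.trans (cge h2))) _root_.id).submatrix
          ⇑(chop a N₁ g₃) _root_.id := by
  conv_lhs => rw [nf2]
  rw [nf2_kron]
  rw [PM _ (C ⊗ₖ (1 : Matrix (Fin g₄) (Fin g₄) ℝ)) ⇑(chop a N₁ g₃) (chop d N₂ g₃) (cge h2) _root_.id]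

lemma nf2_nest_right {a b c d e f : ℕ} (A : Matrix (Fin a) (Fin b) ℝ)
    (M : Matrix (Fin c) (Fin d) ℝ) (N : Matrix (Fin e) (Fin f) ℝ)
    (N₁ N₂ g₁ g₂ : ℕ) (h : d * N₁ = e * N₂) (hR : b * g₁ = (c * N₁) * g₂) :
    nf2 A ((nf2 M N N₁ N₂ h).submatrix ⇑(finProdFinEquiv.symm) ⇑(finProdFinEquiv.symm)) g₁ g₂ hR
      = ((A ⊗ₖ (1 : Matrix (Fin g₁) (Fin g₁) ℝ)) *
          (M ⊗ₖ (1 : Matrix (Fin (N₁*g₂)) (Fin (N₁*g₂)) ℝ)).submatrix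
            (⇑((cge hR).trans (chop c N₁ g₂))) _root_.id *
          (N ⊗ₖ (1 : Matrix (Fin (N₂*g₂)) (Fin (N₂*g₂)) ℝ)).submatrix
            (⇑(cge (show d * (N₁*g₂) = e * (N₂*g₂) by rw [← mul_assoc, ← mul_assoc, h]))) _root_.id
          ).submatrix _root_.id ⇑(chop f N₂ g₂) := by
  conv_lhs => rw [nf2]
  rw [nf2_kron, Matrix.submatrix_submatrix]
  have c1 : ⇑(chop c N₁ g₂) ∘ ⇑(cge hR) = ⇑((cge hR).trans (chop c N₁ g₂)) := by
    funext x; simp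
  have c2 : ⇑(chop f N₂ g₂) ∘ _root_.id = ⇑(chop f N₂ g₂) := rfl
  rw [c1, c2]
  rw [mul_submatrix_right (A ⊗ₖ 1) _ _ ⇑(chop f N₂ g₂)]
  unfold nf2
  ext i j
  simp only [Matrix.submatrix_apply, Matrix.mul_apply, Finset.sum_mul, Finset.mul_sum,
    id_eq, Matrix.kroneckerMap_apply]
  rw [Finset.sum_comm]
  refine Finset.sum_congr rfl fun k _ => Finset.sum_congr rfl fun l _ => by ring
lemma gcd_key' (n p q u : ℕ) :
    Nat.gcd (n * Nat.gcd q u) (p * u) = Nat.gcd (q * n) (u * Nat.gcd n p) := by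
  have l1 : n * Nat.gcd q u = Nat.gcd (n*q) (n*u) := (Nat.gcd_mul_left n q u).symm
  have l2 : u * Nat.gcd n p = Nat.gcd (u*n) (u*p) := (Nat.gcd_mul_left u n p).symm
  rw [l1, l2, Nat.gcd_assoc, mul_comm q n, mul_comm u n, mul_comm u p]

lemma lcm_div_right (q u : ℕ) (hq : 0 < q) : Nat.lcm q u / q = u / Nat.gcd q u := by
  have hdvd : Nat.gcd q u ∣ u := Nat.gcd_dvd_right q u
  have : Nat.lcm q u = q * (u / Nat.gcd q u) := by
    rw [Nat.lcm, Nat.mul_div_assoc q hdvd]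
  rw [this, Nat.mul_div_cancel_left _ hq]

lemma key (n p q u : ℕ) (hn : 0 < n) (hp : 0 < p) (hq : 0 < q) (hu : 0 < u) :
    q * Nat.lcm n (p * (Nat.lcm q u / q)) = p * Nat.lcm (q * (Nat.lcm n p / p)) u := by
  rw [lcm_div_right q u hq, Nat.lcm_comm n p, lcm_div_right p n hp]
  set H := Nat.gcd q u with hH
  set G := Nat.gcd p n with hG
  have hgpos : 0 < G := Nat.gcd_pos_of_pos_left n hp
  have hhpos : 0 < H := Nat.gcd_pos_of_pos_left u hq
  have hgn : G ∣ n := Nat.gcd_dvd_right p n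
  have hhu : H ∣ u := Nat.gcd_dvd_right q u
  have e1 : H * Nat.lcm n (p * (u / H)) = Nat.lcm (n*H) (p*u) := by
    rw [show Nat.lcm (n*H) (p*u) = Nat.lcm (n*H) ((p*(u/H))*H) by
        rw [mul_assoc, Nat.div_mul_cancel hhu]]
    rw [Nat.lcm_mul_right]; ring
  have e2 : G * Nat.lcm (q * (n / G)) u = Nat.lcm (q*n) (u*G) := by
    rw [show Nat.lcm (q*n) (u*G) = Nat.lcm ((q*(n/G))*G) (u*G) by
        rw [mul_assoc, Nat.div_mul_cancel hgn]]
    rw [Nat.lcm_mul_right]; ring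
  have hD : Nat.gcd (n*H) (p*u) = Nat.gcd (q*n) (u*G) := by
    rw [hH, hG, Nat.gcd_comm p n]; exact gcd_key' n p q u
  have hDpos : 0 < Nat.gcd (n*H) (p*u) := Nat.gcd_pos_of_pos_left _ (Nat.mul_pos hn hhpos)
  apply Nat.eq_of_mul_eq_mul_left (Nat.mul_pos hhpos hgpos)
  apply Nat.eq_of_mul_eq_mul_left hDpos
  set D := Nat.gcd (n*H) (p*u) with hDdef
  have m1 : D * Nat.lcm (n*H) (p*u) = (n*H) * (p*u) := Nat.gcd_mul_lcm _ _
  have m2 : D * Nat.lcm (q*n) (u*G) = (q*n) * (u*G) := by rw [hD]; exact Nat.gcd_mul_lcm _ _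
  calc D * (H * G * (q * Nat.lcm n (p * (u / H))))
      = G * q * (D * (H * Nat.lcm n (p * (u/H)))) := by ring
    _ = G * q * (D * Nat.lcm (n*H) (p*u)) := by rw [e1]
    _ = G * q * ((n*H)*(p*u)) := by rw [m1]
    _ = H * p * ((q*n)*(u*G)) := by ring
    _ = H * p * (D * Nat.lcm (q*n) (u*G)) := by rw [m2]
    _ = H * p * (D * (G * Nat.lcm (q * (n/G)) u)) := by rw [e2]
    _ = D * (H * G * (p * Nat.lcm (q * (n / G)) u)) := by ring

section ids
variable (n p q u : ℕ)

lemma id1 : Nat.lcm n (p * (Nat.lcm q u / q)) / n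
    = (Nat.lcm n p / n) * (Nat.lcm (q * (Nat.lcm n p / p)) u / (q * (Nat.lcm n p / p))) := by
  rcases Nat.eq_zero_or_pos n with rfl | hn
  · simp
  rcases Nat.eq_zero_or_pos p with rfl | hp
  · simp
  rcases Nat.eq_zero_or_pos q with rfl | hq
  · simp
  rcases Nat.eq_zero_or_pos u with rfl | hu
  · simp
  have ht1 : 0 < Nat.lcm n p := Nat.lcm_pos hn hp
  have hβpos : 0 < Nat.lcm n p / p :=
    Nat.div_pos (Nat.le_of_dvd ht1 (Nat.dvd_lcm_right n p)) hp
  set β := Nat.lcm n p / p with hβ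
  set α := Nat.lcm n p / n with hα
  set α2 := Nat.lcm q u / q with hα2
  set T := Nat.lcm n (p * α2) with hT
  set S := Nat.lcm (q * β) u with hS
  have hnα : n * α = Nat.lcm n p := Nat.mul_div_cancel' (Nat.dvd_lcm_left n p)
  have hpβ : p * β = Nat.lcm n p := Nat.mul_div_cancel' (Nat.dvd_lcm_right n p)
  have hγ : (q*β) * (S / (q*β)) = S := Nat.mul_div_cancel' (Nat.dvd_lcm_left (q*β) u)
  have hTn : n * (T/n) = T := Nat.mul_div_cancel' (Nat.dvd_lcm_left n (p*α2))
  have hk : q * T = p * S := key n p q u hn hp hq hu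
  apply Nat.eq_of_mul_eq_mul_left (show 0 < n*(q*β) from
    Nat.mul_pos hn (Nat.mul_pos hq hβpos))
  calc n*(q*β)*(T/n) = (q*β)*(n*(T/n)) := by ring
    _ = (q*β)*T := by rw [hTn]
    _ = β*(q*T) := by ring
    _ = β*(p*S) := by rw [hk]
    _ = (p*β)*S := by ring
    _ = (n*α)*S := by rw [hpβ, hnα]
    _ = (n*α)*((q*β)*(S/(q*β))) := by rw [hγ]
    _ = n*(q*β)*(α*(S/(q*β))) := by ring

lemma id2 : (Nat.lcm q u / q) * (Nat.lcm n (p * (Nat.lcm q u / q)) / (p * (Nat.lcm q u / q)))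
    = (Nat.lcm n p / p) * (Nat.lcm (q * (Nat.lcm n p / p)) u / (q * (Nat.lcm n p / p))) := by
  rcases Nat.eq_zero_or_pos n with rfl | hn
  · simp
  rcases Nat.eq_zero_or_pos p with rfl | hp
  · simp
  rcases Nat.eq_zero_or_pos q with rfl | hq
  · simp
  rcases Nat.eq_zero_or_pos u with rfl | hu
  · simp
  have ht1 : 0 < Nat.lcm n p := Nat.lcm_pos hn hp
  have hβpos : 0 < Nat.lcm n p / p :=
    Nat.div_pos (Nat.le_of_dvd ht1 (Nat.dvd_lcm_right n p)) hp
  set β := Nat.lcm n p / p with hβ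
  set α2 := Nat.lcm q u / q with hα2
  set T := Nat.lcm n (p * α2) with hT
  set S := Nat.lcm (q * β) u with hS
  have hpβ : p * β = Nat.lcm n p := Nat.mul_div_cancel' (Nat.dvd_lcm_right n p)
  have hγ : (q*β) * (S / (q*β)) = S := Nat.mul_div_cancel' (Nat.dvd_lcm_left (q*β) u)
  have hγ' : (p*α2) * (T/(p*α2)) = T := Nat.mul_div_cancel' (Nat.dvd_lcm_right n (p*α2))
  have hk : q * T = p * S := key n p q u hn hp hq hu
  apply Nat.eq_of_mul_eq_mul_left (show 0 < p*(q*β) from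
    Nat.mul_pos hp (Nat.mul_pos hq hβpos))
  calc p*(q*β)*(α2*(T/(p*α2))) = (q*β)*((p*α2)*(T/(p*α2))) := by ring
    _ = (q*β)*T := by rw [hγ']
    _ = β*(q*T) := by ring
    _ = β*(p*S) := by rw [hk]
    _ = (p*β)*S := by ring
    _ = (p*β)*((q*β)*(S/(q*β))) := by rw [hγ]
    _ = p*(q*β)*(β*(S/(q*β))) := by ring


lemma id3 : (Nat.lcm q u / u) * (Nat.lcm n (p * (Nat.lcm q u / q)) / (p * (Nat.lcm q u / q)))
    = Nat.lcm (q * (Nat.lcm n p / p)) u / u := by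
  rcases Nat.eq_zero_or_pos n with rfl | hn
  · simp
  rcases Nat.eq_zero_or_pos p with rfl | hp
  · simp
  rcases Nat.eq_zero_or_pos q with rfl | hq
  · simp
  rcases Nat.eq_zero_or_pos u with rfl | hu
  · simp
  have ht2 : 0 < Nat.lcm q u := Nat.lcm_pos hq hu
  have hα2pos : 0 < Nat.lcm q u / q :=
    Nat.div_pos (Nat.le_of_dvd ht2 (Nat.dvd_lcm_left q u)) hq
  set β := Nat.lcm n p / p with hβ
  set α2 := Nat.lcm q u / q with hα2
  set β2 := Nat.lcm q u / u with hβ2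
  set T := Nat.lcm n (p * α2) with hT
  set S := Nat.lcm (q * β) u with hS
  have hqα2 : q * α2 = Nat.lcm q u := Nat.mul_div_cancel' (Nat.dvd_lcm_left q u)
  have huβ2 : u * β2 = Nat.lcm q u := Nat.mul_div_cancel' (Nat.dvd_lcm_right q u)
  have hδ : u * (S / u) = S := Nat.mul_div_cancel' (Nat.dvd_lcm_right (q*β) u)
  have hγ' : (p*α2) * (T/(p*α2)) = T := Nat.mul_div_cancel' (Nat.dvd_lcm_right n (p*α2))
  have hk : q * T = p * S := key n p q u hn hp hq hu
  apply Nat.eq_of_mul_eq_mul_left (show 0 < u*(p*α2) from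
    Nat.mul_pos hu (Nat.mul_pos hp hα2pos))
  calc u*(p*α2)*(β2*(T/(p*α2))) = (u*β2)*((p*α2)*(T/(p*α2))) := by ring
    _ = (u*β2)*T := by rw [hγ']
    _ = (q*α2)*T := by rw [huβ2, hqα2]
    _ = α2*(q*T) := by ring
    _ = α2*(p*S) := by rw [hk]
    _ = (p*α2)*(u*(S/u)) := by rw [hδ]; ring
    _ = u*(p*α2)*(S/u) := by ring

end ids

set_option maxHeartbeats 1600000 in
/-- Associativity of the semi-tensor product: `(A ⋉ B) ⋉ C = A ⋉ (B ⋉ C)`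
(the two sides have the same dimensions, and are equal up to the canonical
identification of the index types). -/
theorem stp_assoc {m n p q u v : ℕ} (A : Matrix (Fin m) (Fin n) ℝ)
    (B : Matrix (Fin p) (Fin q) ℝ) (C : Matrix (Fin u) (Fin v) ℝ) :
    ∃ (hr : m * (Nat.lcm n (p * (Nat.lcm q u / q)) / n) =
            (m * (Nat.lcm n p / n)) *
              (Nat.lcm (q * (Nat.lcm n p / p)) u / (q * (Nat.lcm n p / p))))
      (hc : (v * (Nat.lcm q u / u)) *
              (Nat.lcm n (p * (Nat.lcm q u / q)) / (p * (Nat.lcm q u / q))) =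
            v * (Nat.lcm (q * (Nat.lcm n p / p)) u / u)),
      stp (stp A B) C = (stp A (stp B C)).reindex (finCongr hr) (finCongr hc) := by
  have hr : m * (Nat.lcm n (p * (Nat.lcm q u / q)) / n) =
      (m * (Nat.lcm n p / n)) *
        (Nat.lcm (q * (Nat.lcm n p / p)) u / (q * (Nat.lcm n p / p))) := by
    rw [id1 n p q u]; exact (mul_assoc _ _ _).symm
  have hc : (v * (Nat.lcm q u / u)) *
      (Nat.lcm n (p * (Nat.lcm q u / q)) / (p * (Nat.lcm q u / q))) =
      v * (Nat.lcm (q * (Nat.lcm n p / p)) u / u) := by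
    rw [← id3 n p q u]; exact mul_assoc _ _ _
  refine ⟨hr, hc, ?_⟩
  rw [stp_nf (stp A B) C, stp_nf A B, stp_nf A (stp B C), stp_nf B C]
  rw [nf2_nest_left A B C _ _ _ _ _ _, nf2_nest_right A B C _ _ _ _ _ _]
  rw [Matrix.reindex_apply]
  rw [Matrix.submatrix_submatrix, Matrix.submatrix_submatrix, Matrix.submatrix_submatrix]
  rw [kron_one_cast A (id1 n p q u), kron_one_cast B (id2 n p q u), kron_one_cast C (id3 n p q u)]
  rw [Matrix.submatrix_submatrix, Matrix.submatrix_submatrix]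
  simp only [← Equiv.coe_trans, Function.comp_id, Function.id_comp]
  rw [PM, PM, Matrix.submatrix_submatrix]
  unfold nf2
  refine submatrix_congr' ?_ ?_ ?_
  · refine congrArg₂ (· * ·) (congrArg₂ (· * ·) rfl ?_) ?_
    · refine submatrix_congr' rfl ?_ rfl
      exact uniq2 (pres2_cge _)
        (pres2_trans (pres2_symm (pres2_castr _))
          (pres2_trans (pres2_trans (pres2_cge _) (pres2_chop _ _ _)) (pres2_castr _)))
    · refine submatrix_congr' rfl ?_ rfl
      exact uniq2
        (pres2_trans (pres2_symm (pres2_chop _ _ _)) (pres2_cge _))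
        (pres2_trans (pres2_symm (pres2_castr _)) (pres2_trans (pres2_cge _) (pres2_castr _)))
  · exact uniq1
      (by simp only [Equiv.coe_trans]; exact pres1_comp (pres2_chop _ _ _) pres1_fpf_symm)
      (pres1_comp (pres2_castr _)
        (by simp only [Equiv.coe_trans]; exact pres1_precast pres1_fpf_symm hr))
  · exact uniq1 pres1_fpf_symm
      (pres1_comp (pres2_castr _)
        (by simp only [Equiv.coe_trans]
            exact pres1_comp (pres2_chop _ _ _) (pres1_precast pres1_fpf_symm hc)))
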